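/- arXiv:1206.3965 — 2 statements merged into one kernel-verified Lean document; each statement's English description precedes it below -/
import Mathlib

section
/- For every k ∈ ℕ, every u ≥ 0, all reals γ, δ, and every radius 0 < r < 1, the contour integral ℐ_k satisfies ℐ_k(u,γ,δ) = (δ²/2)^k / Γ(k+1) · Φ₃(1, k+1; δ²/2, (u²/2)·(γ²δ²/2)) − exp(γ²u²/2 + δ²/2). -/
open MeasureTheory Real Finset

set_option maxHeartbeats 1000000

/-- The confluent hypergeometric (Horn) function of two variables `Φ₃`. -/
noncomputable def Phi3 (b c x y : ℝ) : ℝ :=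
  ∑' j : ℕ, ∑' n : ℕ,
    (ascPochhammer ℝ j).eval b /
      ((ascPochhammer ℝ (j + n)).eval c * (j.factorial : ℝ) * (n.factorial : ℝ)) *
      x ^ j * y ^ n

/-- The contour integral `ℐ_k(u,γ,δ)` over the circle of radius `r`. -/
noncomputable def Ik (k : ℕ) (u γ δ r : ℝ) : ℂ :=
  (2 * Real.pi * Complex.I)⁻¹ *
    ∮ p in C(0, r), (p - 1)⁻¹ * p ^ (-(k : ℤ)) *
      Complex.exp ((u : ℂ) ^ 2 * (γ : ℂ) ^ 2 / (2 * p)) * Complex.exp ((δ : ℂ) ^ 2 * p / 2)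

namespace IkAux

/-! ### Basic series -/

noncomputable def T (a b : ℝ) (q : ℕ × ℕ) : ℝ :=
  a ^ q.1 / q.1.factorial * (b ^ q.2 / q.2.factorial)

noncomputable def Fc (a b : ℝ) (i : ℕ × ℕ × ℕ) : ℂ :=
  -(((a : ℂ) ^ i.2.1 / i.2.1.factorial) * ((b : ℂ) ^ i.2.2 / i.2.2.factorial))

def Ec (k : ℕ) (i : ℕ × ℕ × ℕ) : ℤ := (i.1 : ℤ) + i.2.2 - i.2.1 - k

lemma snpfR (a : ℝ) : Summable fun n : ℕ => ‖a ^ n / n.factorial‖ := by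
  simpa [Real.norm_eq_abs, abs_div, abs_pow, Nat.abs_cast] using
    Real.summable_pow_div_factorial |a|

lemma sumT (a b : ℝ) : Summable (T a b) := by
  exact summable_mul_of_summable_norm (snpfR a) (snpfR b)

lemma sumnormT (a b : ℝ) : Summable fun q => ‖T a b q‖ := by
  have := summable_mul_of_summable_norm (f := fun n : ℕ => ‖a ^ n / n.factorial‖)
    (g := fun n : ℕ => ‖b ^ n / n.factorial‖) (by simpa using snpfR a) (by simpa using snpfR b)
  refine this.congr fun q => ?_
  simp [T, norm_mul]

lemma exp_tsum (a : ℝ) : Real.exp a = ∑' n : ℕ, a ^ n / n.factorial := by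
  rw [Real.exp_eq_exp_ℝ, NormedSpace.exp_eq_tsum_div]

lemma exp_add_tsum (a b : ℝ) : Real.exp (a + b) = ∑' q : ℕ × ℕ, T a b q := by
  rw [Real.exp_add, exp_tsum a, exp_tsum b,
    tsum_mul_tsum_of_summable_norm (snpfR a) (snpfR b)]
  rfl

/-! ### The real (right-hand) side -/

lemma phi3_eq (k : ℕ) (a b : ℝ) :
    b ^ k / (k.factorial : ℝ) * Phi3 1 ((k : ℝ) + 1) b (a * b) =
      ∑' (j : ℕ) (n : ℕ), T a b (n, k + j + n) := by
  rw [Phi3, ← tsum_mul_left]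
  refine tsum_congr fun j => ?_
  rw [← tsum_mul_left]
  refine tsum_congr fun n => ?_
  have hponat : ((k.factorial : ℝ)) * (ascPochhammer ℝ (j + n)).eval ((k : ℝ) + 1)
      = ((k + (j + n)).factorial : ℝ) := factorial_mul_ascPochhammer ℝ k (j + n)
  have hk : (k.factorial : ℝ) ≠ 0 := Nat.cast_ne_zero.2 k.factorial_ne_zero
  rw [show k + (j + n) = k + j + n by omega] at hponat
  have hpo : (ascPochhammer ℝ (j + n)).eval ((k : ℝ) + 1)
      = ((k + j + n).factorial : ℝ) / (k.factorial : ℝ) := by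
    rw [eq_div_iff hk, mul_comm]; exact hponat
  rw [ascPochhammer_eval_one, hpo, T]
  have h1 : ((k + j + n).factorial : ℝ) ≠ 0 := Nat.cast_ne_zero.2 (Nat.factorial_ne_zero _)
  have h2 : ((j).factorial : ℝ) ≠ 0 := Nat.cast_ne_zero.2 (Nat.factorial_ne_zero _)
  have h3 : ((n).factorial : ℝ) ≠ 0 := Nat.cast_ne_zero.2 (Nat.factorial_ne_zero _)
  have hbpow : b ^ (k + j + n) = b ^ k * b ^ j * b ^ n := by rw [← pow_add, ← pow_add]
  rw [hbpow]
  field_simp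
  ring

lemma tail_eq (k : ℕ) (a b : ℝ) :
    ∑' (j : ℕ) (n : ℕ), T a b (n, k + j + n)
      = ∑' q : ℕ × ℕ, (if k + q.1 ≤ q.2 then T a b q else 0) := by
  have hψ : Function.Injective (fun p : ℕ × ℕ => ((p.2, k + p.1 + p.2) : ℕ × ℕ)) := by
    intro p q h
    simp only [Prod.mk.injEq] at h
    obtain ⟨h1, h2⟩ := h
    exact Prod.ext (by omega) h1
  have hsupp : Function.support (fun q : ℕ × ℕ => if k + q.1 ≤ q.2 then T a b q else 0)
      ⊆ Set.range (fun p : ℕ × ℕ => ((p.2, k + p.1 + p.2) : ℕ × ℕ)) := by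
    intro q hq
    by_cases h : k + q.1 ≤ q.2
    · refine ⟨(q.2 - (k + q.1), q.1), ?_⟩
      show ((q.1, k + (q.2 - (k + q.1)) + q.1) : ℕ × ℕ) = q
      exact Prod.ext (by omega) (by omega)
    · simp [Function.mem_support, if_neg h] at hq
  have hre := Function.Injective.tsum_eq hψ
    (f := fun q : ℕ × ℕ => if k + q.1 ≤ q.2 then T a b q else 0) hsupp
  have hre' : ∑' p : ℕ × ℕ, T a b (p.2, k + p.1 + p.2)
      = ∑' q : ℕ × ℕ, (if k + q.1 ≤ q.2 then T a b q else 0) := by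
    rw [← hre]
    exact tsum_congr fun p => by
      simp only []
      rw [if_pos (by omega : k + (p.2, k + p.1 + p.2).1 ≤ (p.2, k + p.1 + p.2).2)]
  rw [← hre']
  have hsum : Summable fun p : ℕ × ℕ => T a b (p.2, k + p.1 + p.2) := by
    refine ((sumT a b).comp_injective hψ).congr fun p => rfl
  rw [← Summable.tsum_prod' hsum fun j => ?_]
  exact (sumT a b).comp_injective fun m n h => by
    simp only [Prod.mk.injEq] at h; omega

lemma sum_ite_le (k : ℕ) (a b : ℝ) :
    Summable fun q : ℕ × ℕ => if k + q.1 ≤ q.2 then T a b q else 0 := by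
  refine Summable.of_norm_bounded (sumnormT a b) fun q => ?_
  by_cases h : k + q.1 ≤ q.2 <;> simp [h, norm_nonneg]

lemma sum_ite_lt (k : ℕ) (a b : ℝ) :
    Summable fun q : ℕ × ℕ => if q.2 < k + q.1 then T a b q else 0 := by
  refine Summable.of_norm_bounded (sumnormT a b) fun q => ?_
  by_cases h : q.2 < k + q.1 <;> simp [h, norm_nonneg]

lemma split (k : ℕ) (a b : ℝ) :
    (∑' q : ℕ × ℕ, T a b q) = (∑' q : ℕ × ℕ, if k + q.1 ≤ q.2 then T a b q else 0)
      + ∑' q : ℕ × ℕ, (if q.2 < k + q.1 then T a b q else 0) := by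
  rw [← Summable.tsum_add (sum_ite_le k a b) (sum_ite_lt k a b)]
  refine tsum_congr fun q => ?_
  by_cases h : k + q.1 ≤ q.2
  · rw [if_pos h, if_neg (by omega), add_zero]
  · rw [if_neg h, if_pos (by omega), zero_add]

lemma rhs_eq (k : ℕ) (a b : ℝ) :
    b ^ k / (k.factorial : ℝ) * Phi3 1 ((k : ℝ) + 1) b (a * b) - Real.exp (a + b)
      = -∑' q : ℕ × ℕ, (if q.2 < k + q.1 then T a b q else 0) := by
  rw [phi3_eq, tail_eq, exp_add_tsum, split k a b]
  ring

/-! ### The complex (left-hand) side -/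

lemma exppt (x : ℂ) : Complex.exp x = ∑' n : ℕ, x ^ n / n.factorial := by
  rw [Complex.exp_eq_exp_ℂ, NormedSpace.exp_eq_tsum_div]

lemma snA {p : ℂ} (hp : ‖p‖ < 1) : Summable fun m : ℕ => ‖-(p ^ m)‖ := by
  simpa [norm_pow] using summable_geometric_of_lt_one (norm_nonneg p) hp

lemma snB (a : ℝ) {p : ℂ} (hp : p ≠ 0) :
    Summable fun n : ℕ => ‖((a : ℂ) ^ n / n.factorial) * p ^ (-(n : ℤ))‖ := by
  have h : ∀ n : ℕ, ‖((a : ℂ) ^ n / n.factorial) * p ^ (-(n : ℤ))‖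
      = (|a| / ‖p‖) ^ n / n.factorial := by
    intro n
    rw [norm_mul, norm_div, norm_pow, norm_zpow, Complex.norm_natCast, Complex.norm_real,
      Real.norm_eq_abs, zpow_neg, zpow_natCast, div_pow]
    field_simp
  exact (Real.summable_pow_div_factorial _).congr fun n => (h n).symm

lemma snC (b : ℝ) (p : ℂ) :
    Summable fun j : ℕ => ‖((b : ℂ) ^ j / j.factorial) * p ^ j‖ := by
  have h : ∀ j : ℕ, ‖((b : ℂ) ^ j / j.factorial) * p ^ j‖
      = (|b| * ‖p‖) ^ j / j.factorial := by
    intro j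
    rw [norm_mul, norm_div, norm_pow, norm_pow, Complex.norm_natCast, Complex.norm_real,
      Real.norm_eq_abs, mul_pow]
    ring
  exact (Real.summable_pow_div_factorial _).congr fun j => (h j).symm

lemma pointwise (k : ℕ) (a b : ℝ) {p : ℂ} (hp0 : p ≠ 0) (hp1 : ‖p‖ < 1) :
    (p - 1)⁻¹ * p ^ (-(k : ℤ)) * Complex.exp ((a : ℂ) / p) * Complex.exp ((b : ℂ) * p)
      = ∑' i : ℕ × ℕ × ℕ, Fc a b i * p ^ Ec k i := by
  have h3 : (p - 1)⁻¹ = ∑' m : ℕ, -(p ^ m) := by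
    rw [tsum_neg, tsum_geometric_of_norm_lt_one hp1, ← inv_neg, neg_sub]
  have h2 : Complex.exp ((a : ℂ) / p) = ∑' n : ℕ, ((a : ℂ) ^ n / n.factorial) * p ^ (-(n : ℤ)) := by
    rw [exppt]
    refine tsum_congr fun n => ?_
    rw [div_pow, zpow_neg, zpow_natCast]
    ring
  have h1 : Complex.exp ((b : ℂ) * p) = ∑' j : ℕ, ((b : ℂ) ^ j / j.factorial) * p ^ j := by
    rw [exppt]
    refine tsum_congr fun j => ?_
    rw [mul_pow]
    ring
  have hD : Summable fun q : ℕ × ℕ =>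
      ‖(((a : ℂ) ^ q.1 / q.1.factorial) * p ^ (-(q.1 : ℤ))) *
        (((b : ℂ) ^ q.2 / q.2.factorial) * p ^ q.2)‖ := by
    have := summable_mul_of_summable_norm
      (f := fun n : ℕ => ‖((a : ℂ) ^ n / n.factorial) * p ^ (-(n : ℤ))‖)
      (g := fun j : ℕ => ‖((b : ℂ) ^ j / j.factorial) * p ^ j‖)
      (by simpa using snB a hp0) (by simpa using snC b p)
    exact this.congr fun q => (norm_mul _ _).symm
  have hBC := tsum_mul_tsum_of_summable_norm (snB a hp0) (snC b p)
  have hABC := tsum_mul_tsum_of_summable_norm (snA hp1) hD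
  calc (p - 1)⁻¹ * p ^ (-(k : ℤ)) * Complex.exp ((a : ℂ) / p) * Complex.exp ((b : ℂ) * p)
      = (p - 1)⁻¹ * (Complex.exp ((a : ℂ) / p) * Complex.exp ((b : ℂ) * p)) * p ^ (-(k : ℤ)) := by
        ring
    _ = (∑' m : ℕ, -(p ^ m)) * (∑' q : ℕ × ℕ,
          (((a : ℂ) ^ q.1 / q.1.factorial) * p ^ (-(q.1 : ℤ))) *
          (((b : ℂ) ^ q.2 / q.2.factorial) * p ^ q.2)) * p ^ (-(k : ℤ)) := by
        rw [h1, h2, h3, hBC]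
    _ = (∑' i : ℕ × ℕ × ℕ, -(p ^ i.1) *
          ((((a : ℂ) ^ i.2.1 / i.2.1.factorial) * p ^ (-(i.2.1 : ℤ))) *
           (((b : ℂ) ^ i.2.2 / i.2.2.factorial) * p ^ i.2.2))) * p ^ (-(k : ℤ)) := by
        rw [hABC]
    _ = ∑' i : ℕ × ℕ × ℕ, Fc a b i * p ^ Ec k i := by
        rw [← tsum_mul_right]
        refine tsum_congr fun i => ?_
        obtain ⟨m, n, j⟩ := i
        have hz : p ^ Ec k (m, n, j)
            = p ^ (m : ℤ) * p ^ (-(n : ℤ)) * p ^ (j : ℤ) * p ^ (-(k : ℤ)) := by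
          rw [← zpow_add₀ hp0, ← zpow_add₀ hp0, ← zpow_add₀ hp0]
          congr 1
          simp only [Ec]
          ring
        rw [Fc, hz]
        simp only [zpow_natCast]
        ring

lemma circle_term (k : ℕ) (a b r : ℝ) (hr₀ : 0 < r) (i : ℕ × ℕ × ℕ) :
    (∮ p in C(0, r), Fc a b i * p ^ Ec k i)
      = Fc a b i * (if Ec k i = -1 then (2 * π * Complex.I) else 0) := by
  rw [circleIntegral.integral_const_mul]
  congr 1
  by_cases h : Ec k i = -1
  · rw [if_pos h, h]
    have h0 : (0 : ℂ) ∈ Metric.ball (0 : ℂ) r := by simpa using hr₀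
    have heq : (fun p : ℂ => p ^ (-1 : ℤ)) = fun p : ℂ => (p - 0)⁻¹ := by
      funext p; rw [zpow_neg_one, sub_zero]
    rw [heq]
    exact circleIntegral.integral_sub_inv_of_mem_ball h0
  · rw [if_neg h]
    have heq : (fun p : ℂ => p ^ Ec k i) = fun p : ℂ => (p - 0) ^ Ec k i := by
      funext p; rw [sub_zero]
    rw [heq]
    exact circleIntegral.integral_sub_zpow_of_ne h 0 0 r

lemma sumW (k : ℕ) (a b r : ℝ) (hr₀ : 0 < r) (hr₁ : r < 1) :
    Summable fun i : ℕ × ℕ × ℕ => r * (‖Fc a b i‖ * r ^ Ec k i) := by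
  have hrne : r ≠ 0 := hr₀.ne'
  have s1 : Summable fun m : ℕ => ‖r ^ m‖ := by
    simpa [norm_pow] using summable_geometric_of_lt_one (abs_nonneg r)
      (by rwa [abs_of_pos hr₀] : |r| < 1)
  have s2 := snpfR (|a| / r)
  have s3 := snpfR (|b| * r)
  have hDn : Summable fun q : ℕ × ℕ =>
      ‖((|a| / r) ^ q.1 / q.1.factorial) * ((|b| * r) ^ q.2 / q.2.factorial)‖ := by
    have := summable_mul_of_summable_norm
      (f := fun n : ℕ => ‖(|a| / r) ^ n / n.factorial‖)
      (g := fun n : ℕ => ‖(|b| * r) ^ n / n.factorial‖) (by simpa using s2) (by simpa using s3)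
    exact this.congr fun q => (norm_mul _ _).symm
  have htr : Summable fun i : ℕ × ℕ × ℕ =>
      r ^ i.1 * (((|a| / r) ^ i.2.1 / i.2.1.factorial) *
        ((|b| * r) ^ i.2.2 / i.2.2.factorial)) :=
    summable_mul_of_summable_norm (f := fun m : ℕ => r ^ m)
      (g := fun q : ℕ × ℕ => ((|a| / r) ^ q.1 / q.1.factorial) *
        ((|b| * r) ^ q.2 / q.2.factorial)) s1 hDn
  refine ((htr.mul_left (r * r ^ (-(k : ℤ)))).congr fun i => ?_)
  obtain ⟨m, n, j⟩ := i
  have hE : r ^ Ec k (m, n, j)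
      = r ^ (m : ℤ) * r ^ (-(n : ℤ)) * r ^ (j : ℤ) * r ^ (-(k : ℤ)) := by
    rw [← zpow_add₀ hrne, ← zpow_add₀ hrne, ← zpow_add₀ hrne]
    congr 1
    simp only [Ec]
    ring
  have hF : ‖Fc a b (m, n, j)‖ = |a| ^ n / n.factorial * (|b| ^ j / j.factorial) := by
    rw [Fc, norm_neg, norm_mul, norm_div, norm_div, norm_pow, norm_pow,
      Complex.norm_natCast, Complex.norm_natCast, Complex.norm_real, Complex.norm_real,
      Real.norm_eq_abs, Real.norm_eq_abs]
  rw [hF, hE]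
  simp only [zpow_neg, zpow_natCast, div_pow, mul_pow]
  have hn : ((n.factorial : ℝ)) ≠ 0 := Nat.cast_ne_zero.2 (Nat.factorial_ne_zero _)
  have hj : ((j.factorial : ℝ)) ≠ 0 := Nat.cast_ne_zero.2 (Nat.factorial_ne_zero _)
  field_simp

lemma key (k : ℕ) (a b r : ℝ) (hr₀ : 0 < r) (hr₁ : r < 1) :
    (∮ p in C(0, r), (p - 1)⁻¹ * p ^ (-(k : ℤ)) *
        Complex.exp ((a : ℂ) / p) * Complex.exp ((b : ℂ) * p))
      = ∑' i : ℕ × ℕ × ℕ, Fc a b i * (if Ec k i = -1 then (2 * π * Complex.I) else 0) := by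
  have hrne : r ≠ 0 := hr₀.ne'
  have hz : ∀ θ : ℝ, circleMap 0 r θ ≠ 0 := fun θ => circleMap_ne_center hrne
  have hnorm : ∀ θ : ℝ, ‖circleMap 0 r θ‖ = r := by
    intro θ
    rw [norm_circleMap_zero, abs_of_pos hr₀]
  have h02 : (0 : ℝ) ≤ 2 * π := by positivity
  have hcont : ∀ i : ℕ × ℕ × ℕ, Continuous fun θ : ℝ =>
      deriv (circleMap 0 r) θ * (Fc a b i * circleMap 0 r θ ^ Ec k i) := by
    intro i
    have h1 : Continuous fun θ : ℝ => circleMap 0 r θ ^ Ec k i :=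
      (continuous_circleMap 0 r).zpow₀ (Ec k i) fun θ => Or.inl (hz θ)
    have h2 : Continuous (deriv (circleMap 0 r)) := by
      have : deriv (circleMap 0 r) = fun θ => circleMap 0 r θ * Complex.I := by
        funext θ; exact deriv_circleMap 0 r θ
      rw [this]
      exact (continuous_circleMap 0 r).mul continuous_const
    exact h2.mul (continuous_const.mul h1)
  have hnrm : ∀ (i : ℕ × ℕ × ℕ) (θ : ℝ),
      ‖deriv (circleMap 0 r) θ * (Fc a b i * circleMap 0 r θ ^ Ec k i)‖
        = r * (‖Fc a b i‖ * r ^ Ec k i) := by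
    intro i θ
    rw [deriv_circleMap, norm_mul, norm_mul, norm_mul, Complex.norm_I, norm_zpow, hnorm,
      mul_one]
  rw [circleIntegral]
  have hfun : (fun θ : ℝ => deriv (circleMap 0 r) θ •
      ((circleMap 0 r θ - 1)⁻¹ * circleMap 0 r θ ^ (-(k : ℤ)) *
        Complex.exp ((a : ℂ) / circleMap 0 r θ) * Complex.exp ((b : ℂ) * circleMap 0 r θ)))
      = fun θ : ℝ => ∑' i : ℕ × ℕ × ℕ,
          deriv (circleMap 0 r) θ * (Fc a b i * circleMap 0 r θ ^ Ec k i) := by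
    funext θ
    rw [smul_eq_mul, pointwise k a b (hz θ) (by rw [hnorm θ]; exact hr₁), tsum_mul_left]
  rw [hfun, intervalIntegral.integral_of_le h02]
  rw [MeasureTheory.integral_tsum (fun i => ((hcont i).aestronglyMeasurable).restrict) ?_]
  · refine tsum_congr fun i => ?_
    rw [← intervalIntegral.integral_of_le h02, ← circle_term k a b r hr₀ i, circleIntegral]
    simp only [smul_eq_mul]
  · have hvol : volume (Set.Ioc (0 : ℝ) (2 * π)) = ENNReal.ofReal (2 * π) := by
      simp [Real.volume_Ioc]
    have hle : ∀ i : ℕ × ℕ × ℕ, (∫⁻ θ in Set.Ioc (0 : ℝ) (2 * π),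
        ‖deriv (circleMap 0 r) θ * (Fc a b i * circleMap 0 r θ ^ Ec k i)‖₊)
          ≤ ENNReal.ofReal (r * (‖Fc a b i‖ * r ^ Ec k i)) * ENNReal.ofReal (2 * π) := by
      intro i
      calc ∫⁻ θ in Set.Ioc (0 : ℝ) (2 * π),
            ‖deriv (circleMap 0 r) θ * (Fc a b i * circleMap 0 r θ ^ Ec k i)‖₊
          ≤ ∫⁻ _ in Set.Ioc (0 : ℝ) (2 * π),
              ENNReal.ofReal (r * (‖Fc a b i‖ * r ^ Ec k i)) := by
            refine lintegral_mono fun θ => ?_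
            rw [← hnrm i θ]; exact (ofReal_norm _).ge
        _ = ENNReal.ofReal (r * (‖Fc a b i‖ * r ^ Ec k i)) * ENNReal.ofReal (2 * π) := by
            rw [MeasureTheory.setLIntegral_const, hvol]
    refine ne_top_of_le_ne_top ?_ (ENNReal.tsum_le_tsum hle)
    rw [ENNReal.tsum_mul_right]
    refine ENNReal.mul_ne_top ?_ ENNReal.ofReal_ne_top
    have hpos : ∀ i : ℕ × ℕ × ℕ, 0 ≤ r * (‖Fc a b i‖ * r ^ Ec k i) := by
      intro i
      have : (0:ℝ) ≤ r ^ Ec k i := zpow_nonneg hr₀.le _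
      positivity
    rw [← ENNReal.ofReal_tsum_of_nonneg hpos (sumW k a b r hr₀ hr₁)]
    exact ENNReal.ofReal_ne_top

lemma lhs_eq (k : ℕ) (a b r : ℝ) (hr₀ : 0 < r) (hr₁ : r < 1) :
    (2 * π * Complex.I)⁻¹ * (∮ p in C(0, r), (p - 1)⁻¹ * p ^ (-(k : ℤ)) *
        Complex.exp ((a : ℂ) / p) * Complex.exp ((b : ℂ) * p))
      = -∑' q : ℕ × ℕ, ((if q.2 < k + q.1 then T a b q else 0 : ℝ) : ℂ) := by
  rw [key k a b r hr₀ hr₁, ← tsum_mul_left]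
  have step1 : ∀ i : ℕ × ℕ × ℕ,
      (2 * (π : ℂ) * Complex.I)⁻¹ * (Fc a b i * (if Ec k i = -1 then (2 * π * Complex.I) else 0))
        = (if Ec k i = -1 then Fc a b i else 0) := by
    intro i
    by_cases h : Ec k i = -1
    · rw [if_pos h, if_pos h]
      have h2pi : (2 * (π : ℂ) * Complex.I) ≠ 0 := by
        simp [Real.pi_ne_zero, Complex.I_ne_zero]
      field_simp
      try rw [mul_div_assoc, div_self h2pi, mul_one]
    · rw [if_neg h, if_neg h, mul_zero, mul_zero]
  rw [tsum_congr step1]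
  set ψ : ℕ × ℕ → ℕ × ℕ × ℕ := fun q => (k + q.1 - 1 - q.2, q.1, q.2) with hψdef
  have hψinj : Function.Injective ψ := by
    intro q q' h
    simp only [hψdef, Prod.mk.injEq] at h
    exact Prod.ext h.2.1 h.2.2
  have hsupp : Function.support (fun i : ℕ × ℕ × ℕ => if Ec k i = -1 then Fc a b i else 0)
      ⊆ Set.range ψ := by
    rintro ⟨m, n, j⟩ hi
    by_cases h : Ec k (m, n, j) = -1
    · refine ⟨(n, j), ?_⟩
      show ((k + n - 1 - j, n, j) : ℕ × ℕ × ℕ) = (m, n, j)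
      have : (m : ℤ) + j - n - k = -1 := h
      refine Prod.ext ?_ rfl
      show k + n - 1 - j = m
      omega
    · simp only [Function.mem_support, if_neg h] at hi
      exact absurd rfl hi
  rw [← Function.Injective.tsum_eq hψinj hsupp]
  have step2 : ∀ q : ℕ × ℕ,
      (if Ec k (ψ q) = -1 then Fc a b (ψ q) else 0)
        = -((if q.2 < k + q.1 then T a b q else 0 : ℝ) : ℂ) := by
    intro q
    have hiff : Ec k (ψ q) = -1 ↔ q.2 < k + q.1 := by
      simp only [hψdef, Ec]
      omega
    by_cases h : q.2 < k + q.1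
    · rw [if_pos (hiff.2 h), if_pos h]
      simp only [hψdef, Fc, T]
      push_cast
      ring
    · rw [if_neg (fun hc => h (hiff.1 hc)), if_neg h]
      simp
  rw [tsum_congr step2, tsum_neg, ← Complex.ofReal_tsum]

end IkAux

theorem Ik_eq_Phi3 (k : ℕ) (u γ δ : ℝ) (hu : 0 ≤ u) (r : ℝ) (hr₀ : 0 < r) (hr₁ : r < 1) :
    Ik k u γ δ r =
      (((δ ^ 2 / 2) ^ k / Real.Gamma (k + 1) *
          Phi3 1 (k + 1) (δ ^ 2 / 2) (u ^ 2 / 2 * (γ ^ 2 * δ ^ 2 / 2)) -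
        Real.exp (γ ^ 2 * u ^ 2 / 2 + δ ^ 2 / 2) : ℝ) : ℂ) := by
  set a : ℝ := u ^ 2 * γ ^ 2 / 2 with ha
  set b : ℝ := δ ^ 2 / 2 with hb
  have hfun : (fun p : ℂ => (p - 1)⁻¹ * p ^ (-(k : ℤ)) *
      Complex.exp ((u : ℂ) ^ 2 * (γ : ℂ) ^ 2 / (2 * p)) * Complex.exp ((δ : ℂ) ^ 2 * p / 2))
      = fun p : ℂ => (p - 1)⁻¹ * p ^ (-(k : ℤ)) *
        Complex.exp ((a : ℂ) / p) * Complex.exp ((b : ℂ) * p) := by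
    funext p
    have e1 : (u : ℂ) ^ 2 * (γ : ℂ) ^ 2 / (2 * p) = (a : ℂ) / p := by
      rw [ha]; push_cast; ring
    have e2 : (δ : ℂ) ^ 2 * p / 2 = (b : ℂ) * p := by
      rw [hb]; push_cast; ring
    rw [e1, e2]
  have hreal : (δ ^ 2 / 2) ^ k / Real.Gamma (k + 1) *
      Phi3 1 (k + 1) (δ ^ 2 / 2) (u ^ 2 / 2 * (γ ^ 2 * δ ^ 2 / 2)) -
      Real.exp (γ ^ 2 * u ^ 2 / 2 + δ ^ 2 / 2)
      = -∑' q : ℕ × ℕ, (if q.2 < k + q.1 then IkAux.T a b q else 0) := by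
    have hΓ : Real.Gamma ((k : ℝ) + 1) = (k.factorial : ℝ) := Real.Gamma_nat_eq_factorial k
    have hy : u ^ 2 / 2 * (γ ^ 2 * δ ^ 2 / 2) = a * b := by rw [ha, hb]; ring
    have hA : γ ^ 2 * u ^ 2 / 2 + δ ^ 2 / 2 = a + b := by rw [ha, hb]; ring
    rw [hΓ, hy, hA, ← hb]
    exact IkAux.rhs_eq k a b
  rw [Ik, hfun, IkAux.lhs_eq k a b r hr₀ hr₁, hreal]
  push_cast
  ring
end

section
/- Let b > 0, c > 0, z ≥ 0, y ≥ 0 be reals and let s > max(z, 0) (so in particular s > 0 and s > z). Then the Laplace transform identity ∫_0^∞ e^{−s t} t^{c−1} Φ₃(b, c; z t, y t) dt = Γ(c) · s^{−c} · (1 − z/s)^{−b} · e^{y/s} holds, the integrand being integrable on (0,∞). -/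
open MeasureTheory Real Finset
open scoped ENNReal NNReal
noncomputable def aP (b : ℝ) (j : ℕ) : ℝ := (ascPochhammer ℝ j).eval b / (j.factorial : ℝ)

lemma aP_pos {b : ℝ} (hb : 0 < b) (j : ℕ) : 0 < aP b j :=
  div_pos (ascPochhammer_pos j b hb) (by exact_mod_cast j.factorial_pos)

lemma aP_zero (b : ℝ) : aP b 0 = 1 := by simp [aP]

lemma aP_succ {b : ℝ} (j : ℕ) : ((j : ℝ) + 1) * aP b (j + 1) = (b + j) * aP b j := by
  have h1 : (ascPochhammer ℝ (j+1)).eval b = (ascPochhammer ℝ j).eval b * (b + j) := by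
    rw [ascPochhammer_succ_right]; simp
  have h2 : ((j+1).factorial : ℝ) = ((j:ℝ)+1) * (j.factorial : ℝ) := by
    rw [Nat.factorial_succ]; push_cast; ring
  have h3 : (j.factorial : ℝ) ≠ 0 := by exact_mod_cast j.factorial_ne_zero
  have h4 : ((j:ℝ)+1) ≠ 0 := by positivity
  rw [aP, aP, h1, h2]
  field_simp

lemma tendsto_ratio_aux (a c : ℝ) : Filter.Tendsto (fun x : ℝ => (x + a) / (x + c))
    Filter.atTop (nhds 1) := by
  have h : ∀ᶠ x : ℝ in Filter.atTop, (x + a) / (x + c) = 1 + (a - c) * (x + c)⁻¹ := by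
    filter_upwards [Filter.eventually_gt_atTop (-c)] with x hx
    have : x + c ≠ 0 := by linarith
    field_simp
    ring
  rw [Filter.tendsto_congr' h]
  have h2 : Filter.Tendsto (fun x : ℝ => (a - c) * (x + c)⁻¹) Filter.atTop (nhds 0) := by
    have := (Filter.tendsto_atTop_add_const_right Filter.atTop c (Filter.tendsto_id (α := ℝ))).inv_tendsto_atTop
    simpa using this.const_mul (a - c)
  simpa using (tendsto_const_nhds (x := (1:ℝ))).add h2

lemma summable_U {b ρ : ℝ} (hb : 0 < b) (h0 : 0 < ρ) (h1 : ρ < 1) :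
    Summable (fun j : ℕ => ((j : ℝ) + b + 1) * aP b j * ρ ^ j) := by
  have hpos : ∀ j : ℕ, 0 < ((j : ℝ) + b + 1) * aP b j * ρ ^ j := fun j => by
    have := aP_pos hb j; positivity
  refine summable_of_ratio_test_tendsto_lt_one h1
    (Filter.Eventually.of_forall fun j => (hpos j).ne') ?_
  have key : ∀ j : ℕ, ‖(((j+1 : ℕ):ℝ) + b + 1) * aP b (j+1) * ρ ^ (j+1)‖ /
      ‖((j:ℝ) + b + 1) * aP b j * ρ ^ j‖ =
      (((j:ℝ) + (b+2)) / ((j:ℝ) + (b+1))) * (((j:ℝ) + b) / ((j:ℝ) + 1)) * ρ := by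
    intro j
    have hj1 : (0:ℝ) < (j:ℝ) + 1 := by positivity
    have e1 : aP b (j+1) = (b + j) * aP b j / ((j:ℝ)+1) := by
      rw [eq_div_iff hj1.ne']; linear_combination aP_succ (b := b) j
    rw [Real.norm_of_nonneg (hpos (j+1)).le, Real.norm_of_nonneg (hpos j).le, e1]
    have h2 := (aP_pos hb j).ne'
    have h3 : ((j:ℝ) + b + 1) ≠ 0 := by positivity
    have h4 : ρ ^ j ≠ 0 := by positivity
    push_cast
    field_simp
    ring
  have t1 := (tendsto_ratio_aux (b+2) (b+1)).comp (tendsto_natCast_atTop_atTop (R := ℝ))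
  have t2 := (tendsto_ratio_aux b 1).comp (tendsto_natCast_atTop_atTop (R := ℝ))
  have tt := (t1.mul t2).mul (tendsto_const_nhds (x := ρ))
  simp only [one_mul, Function.comp] at tt
  exact tt.congr (fun j => (key j).symm)

lemma norm_bound_aux {b ρ x : ℝ} (hb : 0 < b) (hx : |x| ≤ ρ) (j : ℕ) (K : ℝ)
    (hK : 0 ≤ K) (hKj : K ≤ (j:ℝ) + b + 1) :
    ‖K * aP b j * x ^ j‖ ≤ ((j:ℝ) + b + 1) * aP b j * ρ ^ j := by
  have h0 : (0:ℝ) ≤ ρ := le_trans (abs_nonneg x) hx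
  have hap := (aP_pos hb j).le
  rw [norm_mul, norm_mul, norm_pow, Real.norm_of_nonneg hK, Real.norm_of_nonneg hap]
  gcongr
  rwa [Real.norm_eq_abs]

lemma summable_mul_aP {b ρ x : ℝ} (hb : 0 < b) (h0 : 0 < ρ) (h1 : ρ < 1) (hx : |x| ≤ ρ)
    (K : ℕ → ℝ) (hK : ∀ j, 0 ≤ K j) (hKj : ∀ j, K j ≤ (j:ℝ) + b + 1) :
    Summable (fun j : ℕ => K j * aP b j * x ^ j) :=
  (summable_U hb h0 h1).of_norm_bounded (fun j => norm_bound_aux hb hx j (K j) (hK j) (hKj j))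

lemma summable_aP {b x : ℝ} (hb : 0 < b) (hx : |x| < 1) :
    Summable (fun j : ℕ => aP b j * x ^ j) := by
  have := summable_mul_aP (x := x) (ρ := (|x|+1)/2) hb (by positivity) (by linarith)
    (by linarith [abs_nonneg x]) (fun _ => 1) (fun _ => zero_le_one)
    (fun j => by show (1:ℝ) ≤ (j:ℝ) + b + 1; have : (0:ℝ) ≤ j := Nat.cast_nonneg j; linarith)
  simpa using this

theorem tsum_aP_eq {b x : ℝ} (hb : 0 < b) (hx : |x| < 1) :
    ∑' j : ℕ, aP b j * x ^ j = (1 - x) ^ (-b) := by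
  set ρ : ℝ := (|x| + 1) / 2 with hρdef
  have habs := abs_nonneg x
  have h0 : 0 < ρ := by positivity
  have h1 : ρ < 1 := by simp only [hρdef]; linarith
  have hxρ : |x| < ρ := by simp only [hρdef]; linarith
  set t : Set ℝ := Set.Ioo (-ρ) ρ with htdef
  have ht : IsOpen t := isOpen_Ioo
  have htc : Convex ℝ t := convex_Ioo _ _
  have h0t : (0:ℝ) ∈ t := by constructor <;> simp [h0]
  have hxt : x ∈ t := by rw [htdef]; rw [Set.mem_Ioo, ← abs_lt]; exact hxρ
  have hmem : ∀ y ∈ t, |y| ≤ ρ := fun y hy => by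
    rw [abs_le]; exact ⟨(Set.mem_Ioo.1 hy).1.le, (Set.mem_Ioo.1 hy).2.le⟩
  -- the series and its termwise derivative
  set g : ℕ → ℝ → ℝ := fun j q => aP b j * q ^ j with hgdef
  set g' : ℕ → ℝ → ℝ := fun j q => aP b j * ((j:ℝ) * q ^ (j - 1)) with hg'def
  set u : ℕ → ℝ := fun j => (1/ρ) * (((j:ℝ) + b + 1) * aP b j * ρ ^ j) with hudef
  have hu : Summable u := (summable_U hb h0 h1).mul_left _
  have hg : ∀ j : ℕ, ∀ y ∈ t, HasDerivAt (g j) (g' j y) y := fun j y _ =>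
    (hasDerivAt_pow j y).const_mul (aP b j)
  have hg' : ∀ j : ℕ, ∀ y ∈ t, ‖g' j y‖ ≤ u j := by
    intro j y hy
    have hyρ := hmem y hy
    have hap := (aP_pos hb j).le
    have hb1 : ‖g' j y‖ ≤ aP b j * ((j:ℝ) * ρ ^ (j-1)) := by
      simp only [hg'def, norm_mul, Real.norm_of_nonneg hap, norm_pow,
        Real.norm_of_nonneg (Nat.cast_nonneg (α := ℝ) j)]
      gcongr
      rwa [Real.norm_eq_abs]
    refine hb1.trans ?_
    cases j with
    | zero =>
      have hap0 := (aP_pos hb 0).le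
      simp only [Nat.cast_zero, zero_mul, mul_zero, hudef]
      positivity
    | succ k =>
      have e : ρ ^ (k + 1 - 1) = (1/ρ) * ρ ^ (k+1) := by
        rw [Nat.add_sub_cancel, pow_succ]; field_simp
      rw [e, hudef]
      have hkb : ((k:ℝ)+1) ≤ ((k+1:ℕ):ℝ) + b + 1 := by push_cast; linarith
      calc aP b (k+1) * (((k+1:ℕ):ℝ) * ((1/ρ) * ρ ^ (k+1)))
          = (1/ρ) * ((((k+1:ℕ):ℝ)) * aP b (k+1) * ρ ^ (k+1)) := by ring
        _ ≤ (1/ρ) * ((((k+1:ℕ):ℝ) + b + 1) * aP b (k+1) * ρ ^ (k+1)) := by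
            have := (aP_pos hb (k+1)).le
            gcongr
            push_cast; linarith
  have hg0 : Summable fun j => g j 0 := by
    apply summable_of_ne_finset_zero (s := ({0} : Finset ℕ))
    intro j hj
    simp only [hgdef]
    rw [zero_pow (by simpa using hj), mul_zero]
  -- summability of various series at points of t
  have Sg : ∀ y ∈ t, Summable (fun j : ℕ => aP b j * y ^ j) := by
    intro y hy
    have := summable_mul_aP hb h0 h1 (hmem y hy) (fun _ => 1) (fun _ => zero_le_one)
      (fun j => by show (1:ℝ) ≤ (j:ℝ) + b + 1; have : (0:ℝ) ≤ j := Nat.cast_nonneg j; linarith)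
    simpa using this
  have Sv : ∀ y ∈ t, Summable (fun j : ℕ => (j:ℝ) * aP b j * y ^ j) := fun y hy =>
    summable_mul_aP hb h0 h1 (hmem y hy) (fun j => (j:ℝ)) (fun j => Nat.cast_nonneg j)
      (fun j => by show (j:ℝ) ≤ (j:ℝ) + b + 1; linarith)
  have Sw : ∀ y ∈ t, Summable (fun j : ℕ => (b + (j:ℝ)) * aP b j * y ^ j) := fun y hy =>
    summable_mul_aP hb h0 h1 (hmem y hy) (fun j => b + (j:ℝ)) (fun j => by positivity)
      (fun j => by show b + (j:ℝ) ≤ (j:ℝ) + b + 1; linarith)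
  have Sg' : ∀ y ∈ t, Summable (fun j : ℕ => g' j y) := fun y hy =>
    hu.of_norm_bounded (fun j => hg' j y hy)
  -- the derivative satisfies the ODE
  have hf : ∀ y ∈ t, HasDerivAt (fun q => ∑' j : ℕ, g j q) (∑' j : ℕ, g' j y) y := fun y hy =>
    hasDerivAt_tsum_of_isPreconnected hu ht htc.isPreconnected hg hg' h0t hg0 hy
  have key : ∀ y ∈ t, (1 - y) * (∑' j : ℕ, g' j y) = b * ∑' j : ℕ, g j y := by
    intro y hy
    have hD : (∑' j : ℕ, g' j y) = ∑' j : ℕ, (b + (j:ℝ)) * aP b j * y ^ j := by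
      rw [Summable.tsum_eq_zero_add (Sg' y hy)]
      have h00 : g' 0 y = 0 := by simp [hg'def]
      rw [h00, zero_add]
      apply tsum_congr
      intro j
      have : g' (j+1) y = (((j:ℝ)+1) * aP b (j+1)) * y ^ j := by
        simp only [hg'def, Nat.add_sub_cancel]; push_cast; ring
      rw [this, aP_succ (b := b) j]
    have hyD : y * (∑' j : ℕ, g' j y) = ∑' j : ℕ, (j:ℝ) * aP b j * y ^ j := by
      rw [hD, ← tsum_mul_left]
      rw [Summable.tsum_eq_zero_add (Sv y hy)]
      simp only [Nat.cast_zero, zero_mul, mul_zero, zero_add]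
      apply tsum_congr
      intro j
      push_cast
      rw [← aP_succ (b := b) j]
      ring
    calc (1 - y) * (∑' j : ℕ, g' j y)
        = (∑' j : ℕ, g' j y) - y * (∑' j : ℕ, g' j y) := by ring
      _ = (∑' j : ℕ, (b + (j:ℝ)) * aP b j * y ^ j) - ∑' j : ℕ, (j:ℝ) * aP b j * y ^ j := by
          rw [hyD, hD]
      _ = ∑' j : ℕ, ((b + (j:ℝ)) * aP b j * y ^ j - (j:ℝ) * aP b j * y ^ j) := by
          rw [Summable.tsum_sub (Sw y hy) (Sv y hy)]
      _ = ∑' j : ℕ, b * (aP b j * y ^ j) := by apply tsum_congr; intro j; ring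
      _ = b * ∑' j : ℕ, g j y := by rw [tsum_mul_left]
  -- the auxiliary function is constant
  set h : ℝ → ℝ := fun q => (∑' j : ℕ, g j q) * (1 - q) ^ b with hhdef
  have hy1 : ∀ y ∈ t, 0 < 1 - y := fun y hy => by
    have := (Set.mem_Ioo.1 hy).2; linarith
  have hh : ∀ y ∈ t, HasDerivAt h 0 y := by
    intro y hy
    have hd2 : HasDerivAt (fun q : ℝ => (1 - q) ^ b) (-1 * b * (1 - y) ^ (b - 1)) y := by
      have hder : HasDerivAt (fun q : ℝ => 1 - q) (-1) y := by
        simpa using (hasDerivAt_id y).const_sub 1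
      exact hder.rpow_const (Or.inl (hy1 y hy).ne')
    have hmul := (hf y hy).mul hd2
    refine HasDerivAt.congr_deriv hmul ?_
    symm
    have e1 : (1 - y) ^ b = (1 - y) ^ (b - 1) * (1 - y) := by
      rw [← Real.rpow_add_one (hy1 y hy).ne']; norm_num
    linear_combination (-(1 - y) ^ (b - 1)) * (key y hy) + (-(∑' j : ℕ, g' j y)) * e1
  have hconst : h x = h 0 := by
    refine htc.is_const_of_fderivWithin_eq_zero (fun y hy => ((hh y hy).differentiableAt).differentiableWithinAt) ?_ hxt h0t
    intro y hy
    rw [fderivWithin_of_isOpen ht hy]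
    exact (hh y hy).hasFDerivAt.fderiv.trans (by ext z; simp)
  have hh0 : h 0 = 1 := by
    have : (∑' j : ℕ, g j 0) = 1 := by
      rw [tsum_eq_single 0 (fun j hj => by simp [hgdef, zero_pow hj])]
      simp [hgdef, aP_zero]
    simp [hhdef, this]
  have hx1 : 0 < 1 - x := by have := abs_lt.1 hx; linarith
  have hfin : (∑' j : ℕ, aP b j * x ^ j) * (1 - x) ^ b = 1 := by
    have hfin0 := hconst.trans hh0
    simp only [hhdef, hgdef] at hfin0
    simpa using hfin0
  rw [Real.rpow_neg hx1.le]
  exact eq_inv_of_mul_eq_one_left hfin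

lemma asc_eval_succ (b : ℝ) (k : ℕ) :
    (ascPochhammer ℝ (k+1)).eval b = (ascPochhammer ℝ k).eval b * (b + k) := by
  rw [ascPochhammer_succ_right]; simp

lemma asc_le {b : ℝ} (hb : 0 < b) (j : ℕ) :
    (ascPochhammer ℝ j).eval b ≤ (max b 1) ^ j * (j.factorial : ℝ) := by
  induction j with
  | zero => simp
  | succ k ih =>
    have hM1 : (1:ℝ) ≤ max b 1 := le_max_right _ _
    have hbM : b ≤ max b 1 := le_max_left _ _
    have hk : (0:ℝ) ≤ k := Nat.cast_nonneg k
    have h1 : b + k ≤ max b 1 * ((k:ℝ)+1) := by nlinarith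
    have hpos := (ascPochhammer_pos k b hb).le
    calc (ascPochhammer ℝ (k+1)).eval b = (ascPochhammer ℝ k).eval b * (b + k) :=
          asc_eval_succ b k
      _ ≤ ((max b 1) ^ k * (k.factorial : ℝ)) * (max b 1 * ((k:ℝ)+1)) := by
          apply mul_le_mul ih h1 (by positivity) (by positivity)
      _ = (max b 1) ^ (k+1) * ((k+1).factorial : ℝ) := by
          rw [Nat.factorial_succ]; push_cast; ring

lemma asc_ge {c : ℝ} (hc : 0 < c) (k : ℕ) :
    (min c 1) ^ k * (k.factorial : ℝ) ≤ (ascPochhammer ℝ k).eval c := by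
  induction k with
  | zero => simp
  | succ k ih =>
    have hm0 : 0 < min c 1 := lt_min hc one_pos
    have hmc : min c 1 ≤ c := min_le_left _ _
    have hm1 : min c 1 ≤ 1 := min_le_right _ _
    have hk : (0:ℝ) ≤ k := Nat.cast_nonneg k
    have h1 : min c 1 * ((k:ℝ)+1) ≤ c + k := by nlinarith
    calc (min c 1) ^ (k+1) * ((k+1).factorial : ℝ)
        = ((min c 1) ^ k * (k.factorial : ℝ)) * (min c 1 * ((k:ℝ)+1)) := by
          rw [Nat.factorial_succ]; push_cast; ring
      _ ≤ (ascPochhammer ℝ k).eval c * (c + k) := by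
          apply mul_le_mul ih h1 (by positivity) (ascPochhammer_pos k c hc).le
      _ = (ascPochhammer ℝ (k+1)).eval c := (asc_eval_succ c k).symm

lemma Gamma_asc {c : ℝ} (hc : 0 < c) (k : ℕ) :
    Real.Gamma (c + k) = (ascPochhammer ℝ k).eval c * Real.Gamma c := by
  induction k with
  | zero => simp
  | succ k ih =>
    have hck : c + k ≠ 0 := by positivity
    have : c + ((k:ℝ)+1) = (c + k) + 1 := by ring
    rw [show ((k+1:ℕ):ℝ) = (k:ℝ)+1 by push_cast; ring, this, Real.Gamma_add_one hck, ih,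
      asc_eval_succ]
    ring

noncomputable def Kco (b c : ℝ) (j n : ℕ) : ℝ :=
  (ascPochhammer ℝ j).eval b /
    ((ascPochhammer ℝ (j + n)).eval c * (j.factorial : ℝ) * (n.factorial : ℝ))

lemma Kco_pos {b c : ℝ} (hb : 0 < b) (hc : 0 < c) (j n : ℕ) : 0 < Kco b c j n := by
  have h1 := ascPochhammer_pos j b hb
  have h2 := ascPochhammer_pos (j+n) c hc
  have h3 : (0:ℝ) < j.factorial := by exact_mod_cast j.factorial_pos
  have h4 : (0:ℝ) < n.factorial := by exact_mod_cast n.factorial_pos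
  exact div_pos h1 (by positivity)

lemma Kco_le {b c : ℝ} (hb : 0 < b) (hc : 0 < c) (j n : ℕ) :
    Kco b c j n ≤ (max b 1) ^ j / ((min c 1) ^ (j+n) * (j.factorial : ℝ) * (n.factorial : ℝ)) := by
  have hm0 : 0 < min c 1 := lt_min hc one_pos
  have h2 := ascPochhammer_pos (j+n) c hc
  have h3 : (0:ℝ) < j.factorial := by exact_mod_cast j.factorial_pos
  have h4 : (0:ℝ) < n.factorial := by exact_mod_cast n.factorial_pos
  have hA := asc_le hb j
  have hfle : (j.factorial : ℝ) * (n.factorial : ℝ) ≤ ((j+n).factorial : ℝ) := by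
    exact_mod_cast Nat.le_of_dvd (j+n).factorial_pos (Nat.factorial_mul_factorial_dvd_factorial_add j n)
  have hB : (min c 1) ^ (j+n) * ((j.factorial : ℝ) * (n.factorial : ℝ)) ≤
      (ascPochhammer ℝ (j+n)).eval c := by
    calc (min c 1) ^ (j+n) * ((j.factorial : ℝ) * (n.factorial : ℝ))
        ≤ (min c 1) ^ (j+n) * ((j+n).factorial : ℝ) := by
          apply mul_le_mul_of_nonneg_left hfle (by positivity)
      _ ≤ _ := asc_ge hc (j+n)
  rw [Kco, div_le_div_iff₀ (by positivity) (by positivity)]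
  calc (ascPochhammer ℝ j).eval b * ((min c 1) ^ (j+n) * (j.factorial : ℝ) * (n.factorial : ℝ))
      = (ascPochhammer ℝ j).eval b * ((min c 1) ^ (j+n) * ((j.factorial : ℝ) * (n.factorial : ℝ))) := by ring
    _ ≤ ((max b 1) ^ j * (j.factorial : ℝ)) * ((ascPochhammer ℝ (j+n)).eval c) := by
        apply mul_le_mul hA hB (by positivity) (by positivity)
    _ ≤ (max b 1) ^ j * ((ascPochhammer ℝ (j+n)).eval c * (j.factorial : ℝ) * (n.factorial : ℝ)) := by
        have hfn1 : (1:ℝ) ≤ (n.factorial : ℝ) := by exact_mod_cast n.factorial_pos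
        calc (max b 1) ^ j * (j.factorial : ℝ) * ((ascPochhammer ℝ (j+n)).eval c)
            = ((max b 1) ^ j * ((ascPochhammer ℝ (j+n)).eval c * (j.factorial : ℝ))) * 1 := by ring
          _ ≤ ((max b 1) ^ j * ((ascPochhammer ℝ (j+n)).eval c * (j.factorial : ℝ))) * (n.factorial : ℝ) := by
              apply mul_le_mul_of_nonneg_left hfn1 (by positivity)
          _ = _ := by ring

set_option maxHeartbeats 2000000 in
lemma summable_Kco {b c : ℝ} (hb : 0 < b) (hc : 0 < c) (x y : ℝ) :
    Summable (fun p : ℕ × ℕ => Kco b c p.1 p.2 * x ^ p.1 * y ^ p.2) := by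
  have hm0 : 0 < min c 1 := lt_min hc one_pos
  have hM0 : (0:ℝ) < max b 1 := lt_of_lt_of_le one_pos (le_max_right _ _)
  have hsum : Summable (fun p : ℕ × ℕ => (max b 1 * |x| / min c 1) ^ p.1 / (p.1.factorial : ℝ) *
      ((|y| / min c 1) ^ p.2 / (p.2.factorial : ℝ))) :=
    (Real.summable_pow_div_factorial _).mul_of_nonneg (Real.summable_pow_div_factorial _)
      (fun j => by positivity) (fun n => by positivity)
  refine Summable.of_norm_bounded hsum ?_
  rintro ⟨j, n⟩
  have h3 : (0:ℝ) < j.factorial := by exact_mod_cast j.factorial_pos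
  have h4 : (0:ℝ) < n.factorial := by exact_mod_cast n.factorial_pos
  have hKpos := (Kco_pos hb hc j n).le
  have e1 : ‖Kco b c j n * x ^ j * y ^ n‖ = Kco b c j n * |x| ^ j * |y| ^ n := by
    rw [norm_mul, norm_mul, norm_pow, norm_pow, Real.norm_of_nonneg hKpos,
      Real.norm_eq_abs, Real.norm_eq_abs]
  rw [e1]
  have e2 : (max b 1 * |x| / min c 1) ^ j / (j.factorial : ℝ) *
      ((|y| / min c 1) ^ n / (n.factorial : ℝ)) =
      ((max b 1) ^ j / ((min c 1) ^ (j+n) * (j.factorial : ℝ) * (n.factorial : ℝ))) *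
        |x| ^ j * |y| ^ n := by
    rw [div_pow, div_pow, mul_pow, pow_add]
    field_simp
  rw [e2]
  exact mul_le_mul_of_nonneg_right
    (mul_le_mul_of_nonneg_right (Kco_le hb hc j n) (by positivity)) (by positivity)

set_option maxHeartbeats 1000000 in
theorem laplace_transform_Phi3 (b c z y s : ℝ) (hb : 0 < b) (hc : 0 < c)
    (hz : 0 ≤ z) (hy : 0 ≤ y) (hs : max z 0 < s) :
    IntegrableOn (fun t : ℝ => Real.exp (-s * t) * t ^ (c - 1) * Phi3 b c (z * t) (y * t))
        (Set.Ioi 0) ∧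
      (∫ t in Set.Ioi (0 : ℝ), Real.exp (-s * t) * t ^ (c - 1) * Phi3 b c (z * t) (y * t)) =
        Real.Gamma c * s ^ (-c) * (1 - z / s) ^ (-b) * Real.exp (y / s) := by
  have hs0 : 0 < s := lt_of_le_of_lt (le_max_right z 0) hs
  have hzs : z < s := lt_of_le_of_lt (le_max_left z 0) hs
  have hq0 : 0 ≤ z / s := div_nonneg hz hs0.le
  have hq1 : z / s < 1 := (div_lt_one hs0).2 hzs
  have hqabs : |z / s| < 1 := by rw [abs_of_nonneg hq0]; exact hq1
  have hr0 : 0 ≤ y / s := div_nonneg hy hs0.le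
  set T : ℕ × ℕ → ℝ → ℝ := fun p t =>
    Real.exp (-s * t) * t ^ (c - 1) * (Kco b c p.1 p.2 * (z * t) ^ p.1 * (y * t) ^ p.2) with hT
  have phi3_eq : ∀ x' y' : ℝ,
      Phi3 b c x' y' = ∑' p : ℕ × ℕ, Kco b c p.1 p.2 * x' ^ p.1 * y' ^ p.2 := by
    intro x' y'
    rw [Phi3]
    exact (Summable.tsum_prod' (summable_Kco hb hc x' y')
      (fun j => (summable_Kco hb hc x' y').prod_factor j)).symm
  have hpt : ∀ t ∈ Set.Ioi (0:ℝ),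
      Real.exp (-s * t) * t ^ (c - 1) * Phi3 b c (z * t) (y * t) = ∑' p : ℕ × ℕ, T p t := by
    intro t _
    rw [phi3_eq, ← tsum_mul_left]
  have key1 : ∀ p : ℕ × ℕ, Set.EqOn (T p)
      (fun t => (Kco b c p.1 p.2 * z ^ p.1 * y ^ p.2) *
        (t ^ (c + (p.1 + p.2 : ℕ) - 1) * Real.exp (-(s * t)))) (Set.Ioi 0) := by
    rintro ⟨j, n⟩ t ht
    have ht0 : (0:ℝ) < t := ht
    have e1 : t ^ (c + ((j + n : ℕ) : ℝ) - 1) = t ^ (c - 1) * (t:ℝ) ^ (j:ℕ) * (t:ℝ) ^ (n:ℕ) := by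
      rw [← Real.rpow_natCast t j, ← Real.rpow_natCast t n, ← Real.rpow_add ht0,
        ← Real.rpow_add ht0]
      push_cast
      ring_nf
    simp only [hT, e1, mul_pow, neg_mul]
    ring
  have cp_pos : ∀ k : ℕ, (0:ℝ) < c + (k:ℝ) := fun k => by positivity
  have int_base : ∀ k : ℕ,
      IntegrableOn (fun t : ℝ => t ^ (c + (k:ℝ) - 1) * Real.exp (-(s * t))) (Set.Ioi 0) := by
    intro k
    have hk : (0:ℝ) ≤ k := Nat.cast_nonneg k
    have h := integrableOn_rpow_mul_exp_neg_mul_rpow (s := c + (k:ℝ) - 1) (p := 1) (b := s)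
      (by linarith) one_pos hs0
    apply h.congr_fun ?_ measurableSet_Ioi
    intro t _
    simp [Real.rpow_one, neg_mul]
  have hTint : ∀ p : ℕ × ℕ, IntegrableOn (T p) (Set.Ioi 0) := by
    intro p
    have h := (int_base (p.1 + p.2)).const_mul (Kco b c p.1 p.2 * z ^ p.1 * y ^ p.2)
    exact MeasureTheory.IntegrableOn.congr_fun h (fun t ht => (key1 p ht).symm) measurableSet_Ioi
  have hTval : ∀ p : ℕ × ℕ, (∫ t in Set.Ioi 0, T p t) =
      (Real.Gamma c * (1/s) ^ c) *
        ((aP b p.1 * (z/s) ^ p.1) * ((y/s) ^ p.2 / (p.2.factorial : ℝ))) := by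
    rintro ⟨j, n⟩
    rw [setIntegral_congr_fun measurableSet_Ioi (key1 (j, n)), MeasureTheory.integral_const_mul,
      Real.integral_rpow_mul_exp_neg_mul_Ioi (cp_pos (j+n)) hs0]
    rw [Gamma_asc hc (j+n)]
    have e2 : (1/s : ℝ) ^ (c + ((j+n : ℕ):ℝ)) = (1/s) ^ c * ((1/s:ℝ) ^ (j:ℕ) * (1/s:ℝ) ^ (n:ℕ)) := by
      rw [Real.rpow_add (by positivity), Real.rpow_natCast]
      push_cast
      rw [pow_add]
    rw [e2, Kco, aP]
    have hsne : s ≠ 0 := hs0.ne'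
    have hasc := (ascPochhammer_pos (j+n) c hc).ne'
    have hjf : ((j.factorial : ℝ)) ≠ 0 := by exact_mod_cast j.factorial_ne_zero
    have hnf : ((n.factorial : ℝ)) ≠ 0 := by exact_mod_cast n.factorial_ne_zero
    field_simp
    ring
  have hsumval : Summable (fun p : ℕ × ℕ => (Real.Gamma c * (1/s) ^ c) *
      ((aP b p.1 * (z/s) ^ p.1) * ((y/s) ^ p.2 / (p.2.factorial : ℝ)))) := by
    apply Summable.mul_left
    exact (summable_aP hb hqabs).mul_of_nonneg (Real.summable_pow_div_factorial (y/s))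
      (fun j => mul_nonneg (aP_pos hb j).le (pow_nonneg hq0 j))
      (fun n => by positivity)
  have hTnonneg : ∀ p : ℕ × ℕ, ∀ t ∈ Set.Ioi (0:ℝ), 0 ≤ T p t := by
    rintro ⟨j, n⟩ t ht
    have ht0 : (0:ℝ) < t := ht
    have h1 := (Kco_pos hb hc j n).le
    have h2 : 0 ≤ z * t := mul_nonneg hz ht0.le
    have h3 : 0 ≤ y * t := mul_nonneg hy ht0.le
    exact mul_nonneg (mul_nonneg (Real.exp_pos _).le (Real.rpow_nonneg ht0.le _))
      (mul_nonneg (mul_nonneg h1 (pow_nonneg h2 _)) (pow_nonneg h3 _))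
  have hnorm_int : ∀ p : ℕ × ℕ, (∫ t in Set.Ioi 0, ‖T p t‖) = ∫ t in Set.Ioi 0, T p t :=
    fun p => setIntegral_congr_fun measurableSet_Ioi
      (fun t ht => Real.norm_of_nonneg (hTnonneg p t ht))
  have hF_sum : Summable (fun p : ℕ × ℕ => ∫ t in Set.Ioi 0, ‖T p t‖) :=
    hsumval.congr (fun p => ((hTval p).symm.trans (hnorm_int p).symm))
  have swap := MeasureTheory.integral_tsum_of_summable_integral_norm
    (μ := volume.restrict (Set.Ioi 0)) hTint hF_sum
  have tsum_val : (∑' p : ℕ × ℕ, ∫ t in Set.Ioi 0, T p t) =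
      Real.Gamma c * s ^ (-c) * (1 - z / s) ^ (-b) * Real.exp (y / s) := by
    rw [tsum_congr hTval, tsum_mul_left]
    have hprod : Summable (fun p : ℕ × ℕ =>
        (aP b p.1 * (z/s) ^ p.1) * ((y/s) ^ p.2 / (p.2.factorial : ℝ))) :=
      (summable_aP hb hqabs).mul_of_nonneg (Real.summable_pow_div_factorial (y/s))
        (fun j => mul_nonneg (aP_pos hb j).le (pow_nonneg hq0 j))
        (fun n => by positivity)
    rw [Summable.tsum_prod' hprod (fun j => hprod.prod_factor j)]
    have e3 : ∀ j : ℕ, (∑' n : ℕ, (aP b j * (z/s) ^ j) * ((y/s) ^ n / (n.factorial : ℝ))) =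
        (aP b j * (z/s) ^ j) * ∑' n : ℕ, (y/s) ^ n / (n.factorial : ℝ) := fun j => tsum_mul_left
    rw [tsum_congr e3, tsum_mul_right, tsum_aP_eq hb hqabs]
    have hexp : (∑' n : ℕ, (y/s) ^ n / (n.factorial : ℝ)) = Real.exp (y/s) := by
      rw [Real.exp_eq_exp_ℝ, NormedSpace.exp_eq_tsum_div]
    have hpow : (1/s : ℝ) ^ c = s ^ (-c) := by
      rw [one_div, Real.inv_rpow hs0.le, ← Real.rpow_neg hs0.le]
    rw [hexp, hpow]
    ring
  -- integrability of the full integrand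
  have hsummableT : ∀ t : ℝ, Summable (fun p : ℕ × ℕ => T p t) := fun t =>
    (summable_Kco hb hc (z*t) (y*t)).mul_left _
  have hTmeas : ∀ p : ℕ × ℕ, Measurable (T p) := by
    rintro ⟨j, n⟩
    exact ((Real.measurable_exp.comp (measurable_id.const_mul (-s))).mul
      (measurable_id.pow_const (c-1))).mul
      ((measurable_const.mul ((measurable_id.const_mul z).pow_const j)).mul
        ((measurable_id.const_mul y).pow_const n))
  have hg0 : IntegrableOn (fun t : ℝ => ∑' p : ℕ × ℕ, T p t) (Set.Ioi 0) := by
    constructor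
    · -- a.e. strong measurability
      set e : ℕ ≃ ℕ × ℕ := (Denumerable.eqv (ℕ × ℕ)).symm with he
      apply aestronglyMeasurable_of_tendsto_ae (f := fun N t => ∑ i ∈ Finset.range N, T (e i) t)
        Filter.atTop
      · intro N
        exact (Finset.measurable_sum _ (fun i _ => hTmeas (e i))).aestronglyMeasurable
      · apply Filter.Eventually.of_forall
        intro t
        have hsum : Summable (fun i : ℕ => T (e i) t) :=
          (e.summable_iff (f := fun p => T p t)).2 (hsummableT t)
        have := hsum.hasSum.tendsto_sum_nat
        rwa [e.tsum_eq (fun p => T p t)] at this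
    · -- finite integral
      rw [MeasureTheory.HasFiniteIntegral]
      have step1 : ∀ t : ℝ, (‖(∑' p : ℕ × ℕ, T p t)‖₊ : ℝ≥0∞) ≤ ∑' p : ℕ × ℕ, (‖T p t‖₊ : ℝ≥0∞) := by
        intro t
        have hns : Summable (fun p : ℕ × ℕ => ‖T p t‖) := by
          have := (hsummableT t).abs
          simpa [Real.norm_eq_abs] using this
        calc (‖(∑' p : ℕ × ℕ, T p t)‖₊ : ℝ≥0∞) = ENNReal.ofReal ‖(∑' p : ℕ × ℕ, T p t)‖ :=
              (ofReal_norm _).symm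
          _ ≤ ENNReal.ofReal (∑' p : ℕ × ℕ, ‖T p t‖) :=
              ENNReal.ofReal_le_ofReal (norm_tsum_le_tsum_norm hns)
          _ = ∑' p : ℕ × ℕ, ENNReal.ofReal ‖T p t‖ :=
              ENNReal.ofReal_tsum_of_nonneg (fun p => norm_nonneg _) hns
          _ = ∑' p : ℕ × ℕ, (‖T p t‖₊ : ℝ≥0∞) := by
              exact tsum_congr (fun p => ofReal_norm _)
      calc ∫⁻ t in Set.Ioi 0, (‖(∑' p : ℕ × ℕ, T p t)‖₊ : ℝ≥0∞)
          ≤ ∫⁻ t in Set.Ioi 0, ∑' p : ℕ × ℕ, (‖T p t‖₊ : ℝ≥0∞) := lintegral_mono (fun t => step1 t)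
        _ = ∑' p : ℕ × ℕ, ∫⁻ t in Set.Ioi 0, (‖T p t‖₊ : ℝ≥0∞) :=
            MeasureTheory.lintegral_tsum (fun p => ((hTmeas p).nnnorm.coe_nnreal_ennreal).aemeasurable)
        _ = ∑' p : ℕ × ℕ, ENNReal.ofReal (∫ t in Set.Ioi 0, ‖T p t‖) :=
            tsum_congr (fun p => (MeasureTheory.ofReal_integral_norm_eq_lintegral_enorm (hTint p)).symm)
        _ = ENNReal.ofReal (∑' p : ℕ × ℕ, ∫ t in Set.Ioi 0, ‖T p t‖) :=
            (ENNReal.ofReal_tsum_of_nonneg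
              (fun p => integral_nonneg (fun t => norm_nonneg _)) hF_sum).symm
        _ < ⊤ := ENNReal.ofReal_lt_top
  constructor
  · exact hg0.congr (Filter.EventuallyEq.symm
      ((ae_restrict_iff' measurableSet_Ioi).2 (Filter.Eventually.of_forall hpt)))
  · rw [setIntegral_congr_fun measurableSet_Ioi hpt, ← swap]
    exact tsum_val
end
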